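/- Let Δ be the open unit disc in ℂ, Y ⊂ ℂ a nonempty open set, and F : Y × Δ → Δ a holomorphic map such that for every y ∈ Y the map f_y = F(y,·) : Δ → Δ has image with compact closure contained in Δ. Let τ_F : Y → Δ assign to y the unique fixed point of f_y. Then τ_F is holomorphic, and for every y₀ ∈ Y its derivative satisfies τ_F'(y₀) = (∂F/∂y)(y₀, τ_F(y₀)) / (1 − (∂F/∂z)(y₀, τ_F(y₀))), where ∂F/∂y and ∂F/∂z denote the partial complex derivatives of F in the first and second variable respectively. -/

import Mathlib

open Metric Set Complex Filter Topology Asymptotics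

local notation "conj'" => starRingEnd ℂ

noncomputable def mob (a z : ℂ) : ℂ := (a - z) / (1 - conj' a * z)

lemma mob_denom_ne {a z : ℂ} (ha : ‖a‖ < 1) (hz : ‖z‖ < 1) : 1 - conj' a * z ≠ 0 := by
  intro h
  have h1 : (1 : ℂ) = conj' a * z := by linear_combination h
  have := congrArg norm h1
  simp only [norm_one, norm_mul, RCLike.norm_conj] at this
  nlinarith [norm_nonneg a, norm_nonneg z]

lemma normSq_key (a z : ℂ) :
    normSq (1 - conj' a * z) - normSq (a - z) = (1 - normSq a) * (1 - normSq z) := by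
  simp only [normSq_apply, Complex.sub_re, Complex.sub_im, Complex.mul_re, Complex.mul_im,
    Complex.conj_re, Complex.conj_im, Complex.one_re, Complex.one_im]
  ring

lemma mob_mem {a z : ℂ} (ha : ‖a‖ < 1) (hz : ‖z‖ < 1) : ‖mob a z‖ < 1 := by
  have hd := mob_denom_ne ha hz
  rw [mob, norm_div, div_lt_one (norm_pos_iff.2 hd)]
  have ha2 : normSq a < 1 := by rw [← Complex.sq_norm]; nlinarith [norm_nonneg a]
  have hz2 : normSq z < 1 := by rw [← Complex.sq_norm]; nlinarith [norm_nonneg z]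
  have key := normSq_key a z
  have h1 : normSq (a - z) < normSq (1 - conj' a * z) := by nlinarith
  refine lt_of_pow_lt_pow_left₀ 2 (norm_nonneg _) ?_
  rw [Complex.sq_norm, Complex.sq_norm]
  exact h1

lemma mob_mob {a z : ℂ} (ha : ‖a‖ < 1) (hz : ‖z‖ < 1) : mob a (mob a z) = z := by
  have h1 : 1 - conj' a * z ≠ 0 := mob_denom_ne ha hz
  have h2 : 1 - conj' a * mob a z ≠ 0 := mob_denom_ne ha (mob_mem ha hz)
  have ha2 : normSq a < 1 := by
    rw [← Complex.sq_norm]; nlinarith [norm_nonneg a]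
  have hne : 1 - a * conj' a ≠ 0 := by
    rw [Complex.mul_conj]
    intro h
    have : ((1 : ℝ) : ℂ) = ((normSq a : ℝ) : ℂ) := by push_cast; linear_combination h
    have := Complex.ofReal_inj.1 this
    linarith
  simp only [mob]
  rw [div_eq_iff (by simpa [mob] using h2)]
  field_simp
  linear_combination (z - a) * mul_inv_cancel₀ (show 1 - z * conj' a ≠ 0 by rwa [mul_comm])

lemma mob_hasDerivAt {a z : ℂ} (h : 1 - conj' a * z ≠ 0) :
    HasDerivAt (mob a) ((normSq a - 1) / (1 - conj' a * z) ^ 2) z := by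
  have h1 : HasDerivAt (fun z => a - z) (-1) z := by
    simpa using (hasDerivAt_id z).const_sub a
  have h2 : HasDerivAt (fun z => 1 - conj' a * z) (-(conj' a)) z := by
    simpa using ((hasDerivAt_id z).const_mul (conj' a)).const_sub 1
  have : HasDerivAt (fun z => (a - z) / (1 - conj' a * z))
      ((-1 * (1 - conj' a * z) - (a - z) * -conj' a) / (1 - conj' a * z) ^ 2) z := h1.div h2 h
  convert this using 1
  have : (conj' a) * a = (normSq a : ℂ) := by rw [mul_comm, Complex.mul_conj]
  congr 1
  linear_combination (Complex.normSq_eq_conj_mul_self (z := a)) / (1 - conj' a * z) ^ 2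

lemma mob_diffOn {a : ℂ} (ha : ‖a‖ < 1) : DifferentiableOn ℂ (mob a) (ball 0 1) := by
  intro z hz
  exact (mob_hasDerivAt (mob_denom_ne ha (mem_ball_zero_iff.1 hz))).differentiableAt.differentiableWithinAt

lemma fixedpt (f : ℂ → ℂ) (hd : DifferentiableOn ℂ f (ball 0 1))
    (hK : IsCompact (closure (f '' ball 0 1)))
    (hsub : closure (f '' ball 0 1) ⊆ ball 0 1)
    {a : ℂ} (ha' : a ∈ ball (0:ℂ) 1) (hfa : f a = a) :
    ‖deriv f a‖ < 1 ∧ ∀ z ∈ ball (0:ℂ) 1, f z = z → z = a := by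
  have ha : ‖a‖ < 1 := mem_ball_zero_iff.1 ha'
  set K := closure (f '' ball 0 1) with hKdef
  set ψ := mob a with hψdef
  have hψa : ψ a = 0 := by simp [hψdef, mob]
  have hψ0 : ψ 0 = a := by simp [hψdef, mob]
  have hKsub : ∀ w ∈ K, ‖w‖ < 1 := fun w hw => mem_ball_zero_iff.1 (hsub hw)
  have hψcont : ContinuousOn ψ K := by
    intro w hw
    exact (mob_hasDerivAt (mob_denom_ne ha (hKsub w hw))).differentiableAt.continuousAt.continuousWithinAt
  have hK'cpt : IsCompact (ψ '' K) := hK.image_of_continuousOn hψcont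
  have hfaK : a ∈ K := by
    rw [← hfa]; exact subset_closure ⟨a, ha', rfl⟩
  have hK'ne : (ψ '' K).Nonempty := ⟨ψ a, a, hfaK, rfl⟩
  obtain ⟨x, hxK, hx'⟩ := hK'cpt.exists_isMaxOn hK'ne continuous_norm.continuousOn
  have hx : ∀ y ∈ ψ '' K, ‖y‖ ≤ ‖x‖ := fun y hy => hx' hy
  obtain ⟨w0, hw0, rfl⟩ := hxK
  set r := ‖ψ w0‖ with hr
  have hrlt : r < 1 := mob_mem ha (hKsub w0 hw0)
  set R := (1 + r) / 2 with hRdef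
  have hrR : r < R := by rw [hRdef]; linarith
  have hR1 : R < 1 := by rw [hRdef]; linarith
  have hR0 : 0 < R := lt_of_le_of_lt (norm_nonneg _) hrR
  -- the conjugated map
  set h := ψ ∘ f ∘ ψ with hhdef
  have hmem : ∀ z ∈ ball (0:ℂ) 1, h z ∈ ψ '' K := by
    intro z hz
    exact ⟨f (ψ z), subset_closure ⟨ψ z, mem_ball_zero_iff.2 (mob_mem ha (mem_ball_zero_iff.1 hz)), rfl⟩, rfl⟩
  have h0 : h 0 = 0 := by simp [hhdef, hψ0, hfa, hψa]
  have hmaps : MapsTo h (ball (0:ℂ) 1) (ball (h 0) R) := by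
    intro z hz
    rw [h0, mem_ball_zero_iff]
    exact lt_of_le_of_lt (hx _ (hmem z hz)) hrR
  have hdh : DifferentiableOn ℂ h (ball 0 1) := by
    have h1 : DifferentiableOn ℂ (f ∘ ψ) (ball 0 1) :=
      hd.comp (mob_diffOn ha) (fun z hz => mem_ball_zero_iff.2 (mob_mem ha (mem_ball_zero_iff.1 hz)))
    exact (mob_diffOn ha).comp h1 (fun z hz => hsub (subset_closure ⟨ψ z, mem_ball_zero_iff.2 (mob_mem ha (mem_ball_zero_iff.1 hz)), rfl⟩))
  have hschwarz := Complex.norm_deriv_le_div_of_mapsTo_ball hdh (hmaps.mono_right ball_subset_closedBall) one_pos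
  -- chain rule : deriv h 0 = deriv f a
  have hsne : 1 - conj' a * a ≠ 0 := mob_denom_ne ha ha
  have hψd0 : HasDerivAt ψ ((normSq a - 1) / (1 - conj' a * 0) ^ 2) 0 :=
    mob_hasDerivAt (by simp)
  have hψda : HasDerivAt ψ ((normSq a - 1) / (1 - conj' a * a) ^ 2) a := mob_hasDerivAt hsne
  have hfd : HasDerivAt f (deriv f a) a :=
    (hd.differentiableAt (isOpen_ball.mem_nhds ha')).hasDerivAt
  have h1 : HasDerivAt (f ∘ ψ) (deriv f a * ((normSq a - 1) / (1 - conj' a * 0) ^ 2)) 0 :=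
    HasDerivAt.comp 0 (by rw [hψ0]; exact hfd) hψd0
  have h2 : HasDerivAt h
      (((normSq a - 1) / (1 - conj' a * a) ^ 2) *
        (deriv f a * ((normSq a - 1) / (1 - conj' a * 0) ^ 2))) 0 :=
    HasDerivAt.comp 0 (by rw [show (f ∘ ψ) 0 = a by simp [hψ0, hfa]]; exact hψda) h1
  have hprod : ((normSq a - 1) / (1 - conj' a * a) ^ 2) * ((normSq a - 1) / (1 - conj' a * 0) ^ 2) = 1 := by
    have hca : conj' a * a = (normSq a : ℂ) := by rw [mul_comm, Complex.mul_conj]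
    rw [hca] at hsne ⊢
    field_simp
    ring
  have hderiv : deriv h 0 = deriv f a := by
    rw [h2.deriv]; linear_combination deriv f a * hprod
  have hlt : ‖deriv f a‖ < 1 := by
    rw [← hderiv]
    calc ‖deriv h 0‖ ≤ R / 1 := hschwarz
    _ < 1 := by rwa [div_one]
  refine ⟨hlt, fun z hz hfz => ?_⟩
  have hz1 : ‖z‖ < 1 := mem_ball_zero_iff.1 hz
  have hwball : ψ z ∈ ball (0:ℂ) 1 := mem_ball_zero_iff.2 (mob_mem ha hz1)
  have hfix : h (ψ z) = ψ z := by
    have hmm := mob_mob ha hz1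
    simp only [hhdef, hψdef, Function.comp_apply, hmm, hfz]
  have hdist := Complex.dist_le_div_mul_dist_of_mapsTo_ball hdh (hmaps.mono_right ball_subset_closedBall) hwball
  rw [hfix, h0, dist_zero_right] at hdist
  have hw0' : ψ z = 0 := by
    have := norm_nonneg (ψ z)
    by_contra hne
    have : 0 < ‖ψ z‖ := norm_pos_iff.2 hne
    nlinarith
  have hzz := mob_mob ha hz1
  rw [show ψ z = mob a z from rfl] at hw0'
  rw [hw0'] at hzz
  rw [← hzz]
  simp [mob]

set_option maxHeartbeats 1600000 in
/-- Theorem 2.3 in the one-dimensional case: if `F : Y × Δ → Δ` is holomorphic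
and each slice `f_y = F(y,·)` has relatively compact image in the unit disc `Δ`,
then the fixed-point map `τ_F` is holomorphic on `Y` and
`τ_F'(y₀) = ∂F/∂y (y₀, τ_F(y₀)) / (1 − ∂F/∂z (y₀, τ_F(y₀)))`. -/
theorem heins_map_derivative_unit_disc
    (Y : Set ℂ) (hYopen : IsOpen Y) (hYne : Y.Nonempty)
    (F : ℂ × ℂ → ℂ)
    (hF : DifferentiableOn ℂ F (Y ×ˢ Metric.ball (0 : ℂ) 1))
    (hFmaps : ∀ y ∈ Y, ∀ z ∈ Metric.ball (0 : ℂ) 1,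
      F (y, z) ∈ Metric.ball (0 : ℂ) 1)
    (hFcpt : ∀ y ∈ Y,
      IsCompact (closure ((fun z => F (y, z)) '' Metric.ball (0 : ℂ) 1)))
    (hFsub : ∀ y ∈ Y,
      closure ((fun z => F (y, z)) '' Metric.ball (0 : ℂ) 1) ⊆
        Metric.ball (0 : ℂ) 1)
    (τ : ℂ → ℂ)
    (hτmem : ∀ y ∈ Y, τ y ∈ Metric.ball (0 : ℂ) 1)
    (hτfix : ∀ y ∈ Y, F (y, τ y) = τ y) :
    DifferentiableOn ℂ τ Y ∧
      ∀ y₀ ∈ Y, deriv τ y₀ =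
        deriv (fun y => F (y, τ y₀)) y₀ /
          (1 - deriv (fun z => F (y₀, z)) (τ y₀)) := by
  have hopen : IsOpen (Y ×ˢ ball (0:ℂ) 1) := hYopen.prod isOpen_ball
  have hslice : ∀ y ∈ Y, DifferentiableOn ℂ (fun z => F (y, z)) (ball 0 1) := by
    intro y hy
    exact hF.comp (((differentiable_const y).prodMk differentiable_id).differentiableOn)
      (fun z hz => ⟨hy, hz⟩)
  have hfp : ∀ y ∈ Y, ‖deriv (fun z => F (y, z)) (τ y)‖ < 1 ∧
      ∀ z ∈ ball (0:ℂ) 1, F (y, z) = z → z = τ y := by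
    intro y hy
    exact fixedpt _ (hslice y hy) (hFcpt y hy) (hFsub y hy) (hτmem y hy) (hτfix y hy)
  have main : ∀ y₀ ∈ Y, HasDerivAt τ
      (deriv (fun y => F (y, τ y₀)) y₀ / (1 - deriv (fun z => F (y₀, z)) (τ y₀))) y₀ := by
    intro y₀ hy₀
    set a := τ y₀ with ha_def
    have ha : a ∈ ball (0:ℂ) 1 := hτmem y₀ hy₀
    have hay : (y₀, a) ∈ Y ×ˢ ball (0:ℂ) 1 := ⟨hy₀, ha⟩
    have hFdiff : DifferentiableAt ℂ F (y₀, a) := hF.differentiableAt (hopen.mem_nhds hay)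
    set L := fderiv ℂ F (y₀, a) with hLdef
    have hL : HasFDerivAt F L (y₀, a) := hFdiff.hasFDerivAt
    set p := L (1, 0) with hpdef
    set q := L (0, 1) with hqdef
    have hLapp : ∀ u v : ℂ, L (u, v) = u * p + v * q := by
      intro u v
      have huv : (u, v) = u • ((1:ℂ), (0:ℂ)) + v • ((0:ℂ), (1:ℂ)) := by
        simp [Prod.ext_iff]
      rw [huv, map_add, map_smul, map_smul, smul_eq_mul, smul_eq_mul]
    have hq : HasDerivAt (fun z => F (y₀, z)) q a := by
      have h1 : HasDerivAt (fun z : ℂ => ((y₀, z) : ℂ × ℂ)) ((0 : ℂ), (1 : ℂ)) a :=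
        (hasDerivAt_const a y₀).prodMk (hasDerivAt_id a)
      exact hL.comp_hasDerivAt a h1
    have hp : HasDerivAt (fun y => F (y, a)) p y₀ := by
      have h1 : HasDerivAt (fun y : ℂ => ((y, a) : ℂ × ℂ)) ((1 : ℂ), (0 : ℂ)) y₀ :=
        (hasDerivAt_id y₀).prodMk (hasDerivAt_const y₀ a)
      exact hL.comp_hasDerivAt y₀ h1
    have hqnorm : ‖q‖ < 1 := by rw [← hq.deriv]; exact (hfp y₀ hy₀).1
    have hqne : (1 : ℂ) - q ≠ 0 := by
      intro h
      have : q = 1 := by linear_combination -h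
      rw [this] at hqnorm; simp at hqnorm
    -- continuity of τ at y₀
    have hcont : Filter.Tendsto τ (𝓝 y₀) (𝓝 a) := by
      rw [Metric.tendsto_nhds]
      intro ε hε
      set ρ₀ : ℝ := (1 - ‖a‖) / 2 with hρ₀def
      have ha1 : ‖a‖ < 1 := mem_ball_zero_iff.1 ha
      have hρ₀ : 0 < ρ₀ := by rw [hρ₀def]; linarith
      set ρ : ℝ := min (ε / 2) ρ₀ with hρdef
      have hρpos : 0 < ρ := lt_min (by linarith) hρ₀
      have hρε : ρ < ε := lt_of_le_of_lt (min_le_left _ _) (by linarith)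
      have hBsub : closedBall a ρ ⊆ ball (0:ℂ) 1 := by
        intro z hz
        rw [mem_closedBall, dist_eq_norm] at hz
        rw [mem_ball_zero_iff]
        have h1 : ‖z‖ ≤ ‖a‖ + ‖z - a‖ := by
          calc ‖z‖ = ‖a + (z - a)‖ := by ring_nf
          _ ≤ ‖a‖ + ‖z - a‖ := norm_add_le _ _
        have h2 : ρ ≤ ρ₀ := min_le_right _ _
        rw [hρ₀def] at h2
        linarith
      have hsne : (sphere a ρ).Nonempty := NormedSpace.sphere_nonempty.2 hρpos.le
      have hscpt : IsCompact (sphere a ρ) := isCompact_sphere a ρ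
      have hg0cont : ContinuousOn (fun z => F (y₀, z) - z) (closedBall a ρ) :=
        ((hslice y₀ hy₀).continuousOn.mono hBsub).sub continuousOn_id
      obtain ⟨z₁, hz₁s, hz₁min⟩ := hscpt.exists_isMinOn hsne
        (continuous_norm.comp_continuousOn (hg0cont.mono sphere_subset_closedBall))
      set m := ‖F (y₀, z₁) - z₁‖ with hmdef
      have hm : 0 < m := by
        rw [hmdef, norm_pos_iff]
        intro h
        have hz₁b : z₁ ∈ ball (0:ℂ) 1 := hBsub (sphere_subset_closedBall hz₁s)
        have : z₁ = a := (hfp y₀ hy₀).2 z₁ hz₁b (by linear_combination h)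
        rw [this] at hz₁s
        rw [mem_sphere, dist_self] at hz₁s
        exact hρpos.ne' hz₁s.symm
      obtain ⟨δy, hδy, hδyY⟩ := Metric.isOpen_iff.1 hYopen y₀ hy₀
      set U : Set ℂ := closedBall y₀ (δy / 2) with hUdef
      have hUY : U ⊆ Y := fun y hy =>
        hδyY (lt_of_le_of_lt (mem_closedBall.1 hy) (by linarith))
      have hUcpt : IsCompact U := isCompact_closedBall _ _
      have hTcpt : IsCompact (U ×ˢ closedBall a ρ) := hUcpt.prod (isCompact_closedBall _ _)
      have hTsub : U ×ˢ closedBall a ρ ⊆ Y ×ˢ ball (0:ℂ) 1 := prod_mono hUY hBsub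
      have hucont : UniformContinuousOn (↿(fun y z => F (y, z))) (U ×ˢ closedBall a ρ) := by
        apply hTcpt.uniformContinuousOn_of_continuous
        exact (hF.continuousOn.mono hTsub).congr (fun x _ => rfl)
      have htu := hucont.tendstoUniformlyOn (x := y₀) (mem_closedBall_self (by linarith))
      have hUnhds : U ∈ 𝓝 y₀ := Metric.closedBall_mem_nhds y₀ (by linarith)
      rw [nhdsWithin_eq_nhds.2 hUnhds] at htu
      rw [Metric.tendstoUniformlyOn_iff] at htu
      have hev1 := htu (m / 2) (by linarith)
      have hev2 : ∀ᶠ y in 𝓝 y₀, y ∈ Y := hYopen.mem_nhds hy₀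
      filter_upwards [hev1, hev2] with y hy1 hyY
      have hclose : ∀ z ∈ closedBall a ρ, ‖F (y, z) - F (y₀, z)‖ < m / 2 := by
        intro z hz
        have := hy1 z hz
        rwa [dist_eq_norm, norm_sub_rev] at this
      have hgycont : ContinuousOn (fun z => F (y, z) - z) (closedBall a ρ) :=
        ((hslice y hyY).continuousOn.mono hBsub).sub continuousOn_id
      obtain ⟨c, hcB, hcmin⟩ := (isCompact_closedBall a ρ).exists_isMinOn
        ⟨a, mem_closedBall_self hρpos.le⟩ (continuous_norm.comp_continuousOn hgycont)
      have hga : ‖F (y, a) - a‖ < m / 2 := by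
        have := hclose a (mem_closedBall_self hρpos.le)
        rwa [hτfix y₀ hy₀] at this
      have hcmin' : ‖F (y, c) - c‖ ≤ ‖F (y, a) - a‖ := hcmin (mem_closedBall_self hρpos.le)
      have hcint : c ∈ ball a ρ := by
        rw [mem_ball]
        rcases lt_or_eq_of_le (mem_closedBall.1 hcB) with h | h
        · exact h
        · exfalso
          have hcs : c ∈ sphere a ρ := by rwa [mem_sphere]
          have h1 : m ≤ ‖F (y₀, c) - c‖ := hz₁min hcs
          have h2 : ‖F (y₀, c) - c‖ - ‖F (y, c) - c‖ ≤ ‖F (y₀, c) - F (y, c)‖ := by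
            have h2a := norm_sub_norm_le (F (y₀, c) - c) (F (y, c) - c)
            have h2b : F (y₀, c) - c - (F (y, c) - c) = F (y₀, c) - F (y, c) := by ring
            rwa [h2b] at h2a
          have h3 : ‖F (y₀, c) - F (y, c)‖ < m / 2 := by
            rw [norm_sub_rev]; exact hclose c hcB
          linarith
      have hc1 : c ∈ ball (0:ℂ) 1 := hBsub hcB
      have hgyd : DifferentiableOn ℂ (fun z => F (y, z) - z) (ball 0 1) :=
        (hslice y hyY).sub differentiable_id.differentiableOn
      have hd : ∀ᶠ z in 𝓝 c, DifferentiableAt ℂ (fun z => F (y, z) - z) z := by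
        filter_upwards [isOpen_ball.mem_nhds hc1] with z hz
        exact hgyd.differentiableAt (isOpen_ball.mem_nhds hz)
      have hlocmin : IsLocalMin (norm ∘ fun z => F (y, z) - z) c :=
        hcmin.isLocalMin (closedBall_mem_nhds_of_mem hcint)
      have hc0 : F (y, c) = c := by
        rcases Complex.eventually_eq_or_eq_zero_of_isLocalMin_norm hd hlocmin with hconst | h0
        · have han : AnalyticOnNhd ℂ (fun z => F (y, z) - z) (ball 0 1) :=
            hgyd.analyticOnNhd isOpen_ball
          have heq : EqOn (fun z => F (y, z) - z) (fun _ => F (y, c) - c) (ball 0 1) :=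
            han.eqOn_of_preconnected_of_eventuallyEq analyticOnNhd_const
              (convex_ball (0:ℂ) 1).isPreconnected hc1 hconst
          have := heq (hτmem y hyY)
          simp only [hτfix y hyY, sub_self] at this
          linear_combination -this
        · linear_combination h0
      have : c = τ y := (hfp y hyY).2 c hc1 hc0
      rw [← this]
      calc dist c a < ρ := mem_ball.1 hcint
      _ < ε := hρε
    -- derivative via little-o algebra
    set t := p / (1 - q) with htdef
    have hΦ : Filter.Tendsto (fun y => ((y, τ y) : ℂ × ℂ)) (𝓝 y₀) (𝓝 (y₀, a)) :=
      Filter.tendsto_id.prodMk_nhds hcont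
    have hRo0 : (fun y => F (y, τ y) - F (y₀, a) - L ((y, τ y) - (y₀, a)))
        =o[𝓝 y₀] fun y => ((y, τ y) : ℂ × ℂ) - (y₀, a) :=
      hL.isLittleO.comp_tendsto hΦ
    set R : ℂ → ℂ := fun y => (1 - q) * (τ y - a) - (y - y₀) * p with hRdef
    have hReq : ∀ᶠ y in 𝓝 y₀,
        F (y, τ y) - F (y₀, a) - L ((y, τ y) - (y₀, a)) = R y := by
      filter_upwards [hYopen.mem_nhds hy₀] with y hyY
      have h1 : ((y, τ y) : ℂ × ℂ) - (y₀, a) = (y - y₀, τ y - a) := rfl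
      rw [h1, hLapp, hτfix y hyY, hτfix y₀ hy₀, hRdef]
      ring
    have hRo : R =o[𝓝 y₀] fun y => ((y, τ y) : ℂ × ℂ) - (y₀, a) :=
      hRo0.congr' hReq Filter.EventuallyEq.rfl
    have hqpos : 0 < ‖(1:ℂ) - q‖ := norm_pos_iff.2 hqne
    set C : ℝ := 2 * ‖p‖ / ‖(1:ℂ) - q‖ + 1 with hCdef
    have hC1 : 1 ≤ C := by
      rw [hCdef]
      have : 0 ≤ 2 * ‖p‖ / ‖(1:ℂ) - q‖ := by positivity
      linarith
    have hnormD : ∀ y : ℂ, ‖((y, τ y) : ℂ × ℂ) - (y₀, a)‖ = max ‖y - y₀‖ ‖τ y - a‖ := by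
      intro y
      rfl
    have hbound : ∀ᶠ y in 𝓝 y₀, ‖τ y - a‖ ≤ C * ‖y - y₀‖ := by
      have := hRo.def (show (0:ℝ) < ‖(1:ℂ) - q‖ / 2 by positivity)
      filter_upwards [this] with y hy
      rw [hnormD] at hy
      have he1 : ‖(1:ℂ) - q‖ * ‖τ y - a‖ ≤ ‖R y‖ + ‖y - y₀‖ * ‖p‖ := by
        have : (1 - q) * (τ y - a) = R y + (y - y₀) * p := by rw [hRdef]; ring
        calc ‖(1:ℂ) - q‖ * ‖τ y - a‖ = ‖(1 - q) * (τ y - a)‖ := (norm_mul _ _).symm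
        _ = ‖R y + (y - y₀) * p‖ := by rw [this]
        _ ≤ ‖R y‖ + ‖(y - y₀) * p‖ := norm_add_le _ _
        _ = ‖R y‖ + ‖y - y₀‖ * ‖p‖ := by rw [norm_mul]
      have hmax : max ‖y - y₀‖ ‖τ y - a‖ ≤ ‖y - y₀‖ + ‖τ y - a‖ :=
        max_le_add_of_nonneg (norm_nonneg _) (norm_nonneg _)
      have hkey : ‖(1:ℂ) - q‖ * ‖τ y - a‖ ≤
          ‖(1:ℂ) - q‖ / 2 * (‖y - y₀‖ + ‖τ y - a‖) + ‖y - y₀‖ * ‖p‖ := by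
        nlinarith [norm_nonneg (R y)]
      have e1 : 2 * ‖p‖ / ‖(1:ℂ) - q‖ * ‖(1:ℂ) - q‖ = 2 * ‖p‖ :=
        div_mul_cancel₀ _ hqpos.ne'
      rw [hCdef]
      nlinarith [norm_nonneg (y - y₀), norm_nonneg (τ y - a), hkey, e1, hqpos]
    have hOB : (fun y => ((y, τ y) : ℂ × ℂ) - (y₀, a)) =O[𝓝 y₀] fun y => y - y₀ := by
      rw [Asymptotics.isBigO_iff]
      refine ⟨C, ?_⟩
      filter_upwards [hbound] with y hy
      rw [hnormD]
      apply max_le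
      · calc ‖y - y₀‖ = 1 * ‖y - y₀‖ := (one_mul _).symm
        _ ≤ C * ‖y - y₀‖ := by nlinarith [norm_nonneg (y - y₀)]
      · exact hy
    have hRo2 : R =o[𝓝 y₀] fun y => y - y₀ := hRo.trans_isBigO hOB
    have hfinal : (fun y => τ y - τ y₀ - (y - y₀) • t) =o[𝓝 y₀] fun y => y - y₀ := by
      have h1 := hRo2.const_mul_left ((1 - q)⁻¹)
      apply h1.congr_left
      intro y
      simp only [hRdef, smul_eq_mul, htdef, ← ha_def]
      linear_combination (τ y - a) * inv_mul_cancel₀ hqne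
    have hder : HasDerivAt τ t y₀ := hasDerivAt_iff_isLittleO.2 hfinal
    rw [hp.deriv, hq.deriv]
    exact hder
  constructor
  · exact fun y hy => (main y hy).differentiableAt.differentiableWithinAt
  · exact fun y₀ hy₀ => (main y₀ hy₀).deriv
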